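/- Let G_1^s be the bipartite graph consisting of s ≥ 2 pairwise internally disjoint paths of length 3 joining two fixed vertices. Then its permanental polynomial is π(G_1^s, x) = (1 + 1/(x² + s − 1) + s/(x² + 1)) · (x² + s − 1) · (x² + 1)^s. -/

import Mathlib

open Polynomial

/-- The graph `G₁ˢ`: two hub vertices `u = Sum.inl 0` and `v = Sum.inl 1` joined by `s`
pairwise internally disjoint paths of length three `u — (i,0) — (i,1) — v`. -/
def G1 (s : ℕ) : SimpleGraph (Fin 2 ⊕ Fin s × Fin 2) :=
  SimpleGraph.fromRel (fun x y => ∃ i : Fin s,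
    (x = Sum.inl 0 ∧ y = Sum.inr (i, 0)) ∨
    (x = Sum.inl 1 ∧ y = Sum.inr (i, 1)) ∨
    (x = Sum.inr (i, 0) ∧ y = Sum.inr (i, 1)))


open Polynomial Equiv Matrix Finset

variable {R : Type*} [CommSemiring R]

/-- permanent is invariant under simultaneous reindexing. -/
theorem perm_submatrix {m n : Type*} [DecidableEq m] [Fintype m] [DecidableEq n] [Fintype n]
    (e : m ≃ n) (M : Matrix n n R) : (M.submatrix e e).permanent = M.permanent := by
  unfold Matrix.permanent
  refine Fintype.sum_bijective (e.permCongr) (e.permCongr).bijective _ _ (fun σ => ?_)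
  refine Fintype.prod_equiv e _ _ (fun i => ?_)
  simp [Equiv.permCongr_apply]

/-- sign-conjugation invariance. -/
theorem perm_conj {n : Type*} [DecidableEq n] [Fintype n]
    (ε : n → R) (M : Matrix n n R) :
    (Matrix.of fun i j => ε i * M i j * ε j).permanent
      = (∏ i, ε i * ε i) * M.permanent := by
  unfold Matrix.permanent
  rw [Finset.mul_sum]
  refine Finset.sum_congr rfl (fun σ _ => ?_)
  calc ∏ i, (Matrix.of fun i j => ε i * M i j * ε j) (σ i) i
      = (∏ i, ε (σ i)) * ((∏ i, M (σ i) i) * ∏ i, ε i) := by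
        simp [Finset.prod_mul_distrib]; ring
    _ = ((∏ i, ε i) * ∏ i, ε i) * ∏ i, M (σ i) i := by rw [Equiv.prod_comp σ ε]; ring
    _ = _ := by rw [← Finset.prod_mul_distrib]

/-- two identical unit rows force the permanent to vanish. -/
theorem perm_two_unit_rows {n : Type*} [DecidableEq n] [Fintype n]
    (M : Matrix n n R) (r1 r2 c : n) (hne : r1 ≠ r2)
    (h1 : ∀ j, j ≠ c → M r1 j = 0) (h2 : ∀ j, j ≠ c → M r2 j = 0) :
    M.permanent = 0 := by
  unfold Matrix.permanent
  refine Finset.sum_eq_zero (fun σ _ => ?_)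
  by_cases hc : σ.symm r1 = c
  · refine Finset.prod_eq_zero (Finset.mem_univ (σ.symm r2)) ?_
    rw [Equiv.apply_symm_apply]
    refine h2 _ (fun h => hne ?_)
    rw [← hc] at h; exact (σ.symm.injective h).symm ▸ rfl
  · refine Finset.prod_eq_zero (Finset.mem_univ (σ.symm r1)) ?_
    rw [Equiv.apply_symm_apply]
    exact h1 _ hc

/-- Laplace-type expansion of the permanent along the `none` column. -/
theorem perm_expand_option {α : Type*} [DecidableEq α] [Fintype α]
    (M : Matrix (Option α) (Option α) R) :
    M.permanent = ∑ x : Option α, M x none *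
      (Matrix.of fun i j : α => M (Equiv.swap none x (some i)) (some j)).permanent := by
  unfold Matrix.permanent
  rw [← Equiv.sum_comp (Equiv.Perm.decomposeOption (α := α)).symm]
  rw [Fintype.sum_prod_type]
  refine Finset.sum_congr rfl (fun x _ => ?_)
  rw [Finset.mul_sum]
  refine Finset.sum_congr rfl (fun τ _ => ?_)
  rw [Fintype.prod_option]
  have h0 : (Equiv.Perm.decomposeOption.symm (x, τ)) none = x := by simp
  rw [h0]
  refine congrArg _ (Finset.prod_congr rfl (fun i _ => ?_))
  simp [Equiv.Perm.decomposeOption_symm_apply, Equiv.Perm.mul_apply]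

/-- Laplace-type expansion of the permanent along the last column. -/
theorem perm_expand_last {n : ℕ} (M : Matrix (Fin (n+1)) (Fin (n+1)) R) :
    M.permanent = ∑ p : Fin (n+1), M p (Fin.last n) *
      (Matrix.of fun i j : Fin n =>
        M (Equiv.swap (Fin.last n) p i.castSucc) j.castSucc).permanent := by
  have e : Option (Fin n) ≃ Fin (n+1) := finSuccEquivLast.symm
  rw [← perm_submatrix (finSuccEquivLast (n := n)).symm M]
  rw [perm_expand_option]
  rw [← Equiv.sum_comp (finSuccEquivLast (n := n)).symm
    (fun p => M p (Fin.last n) * (Matrix.of fun i j : Fin n =>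
        M (Equiv.swap (Fin.last n) p i.castSucc) j.castSucc).permanent)]
  refine Finset.sum_congr rfl (fun x _ => ?_)
  have hnone : (finSuccEquivLast (n := n)).symm none = Fin.last n := by simp
  have key : (Matrix.of fun i j : Fin n =>
      (M.submatrix finSuccEquivLast.symm finSuccEquivLast.symm)
        ((Equiv.swap none x) (some i)) (some j)) = (Matrix.of fun i j : Fin n =>
      M (Equiv.swap (Fin.last n) (finSuccEquivLast.symm x) i.castSucc) j.castSucc) := by
    ext i j
    simp only [Matrix.of_apply, Matrix.submatrix_apply]
    have harg : finSuccEquivLast.symm ((Equiv.swap none x) (some i))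
        = Equiv.swap (Fin.last n) (finSuccEquivLast.symm x) i.castSucc := by
      by_cases hx : x = some i
      · subst hx
        simp [Equiv.swap_apply_right, hnone]
      · rw [Equiv.swap_apply_of_ne_of_ne (by simp) (Ne.symm hx),
          Equiv.swap_apply_of_ne_of_ne, finSuccEquivLast_symm_some]
        · exact (Fin.castSucc_lt_last i).ne
        · intro h
          exact hx (by simpa using (finSuccEquivLast.symm.injective (by simp [h, finSuccEquivLast_symm_some])))
    rw [harg, finSuccEquivLast_symm_some]
  rw [key]
  congr 1

theorem perm_fin_two (M : Matrix (Fin 2) (Fin 2) R) :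
    M.permanent = M 0 0 * M 1 1 + M 1 0 * M 0 1 := by
  rw [perm_expand_last M]
  rw [Fin.sum_univ_two]
  have h1 : (Fin.last 1) = (1 : Fin 2) := rfl
  simp only [h1, Matrix.permanent_unique]
  have hd : (default : Fin 1) = 0 := rfl
  simp only [hd, Matrix.of_apply]
  have e0 : (Equiv.swap (1 : Fin 2) 0 ((0 : Fin 1).castSucc)) = 1 := by decide
  have e1 : (Equiv.swap (1 : Fin 2) 1 ((0 : Fin 1).castSucc)) = 0 := by decide
  have c0 : ((0 : Fin 1).castSucc) = (0 : Fin 2) := rfl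
  rw [e0, e1, c0]
  ring
open Polynomial Equiv Matrix Finset

/-- hub row: `d` is the hub's own column (0 for `u`, 1 for `v`).
`none` = live hub row, `some k` = unit row with a `1` in column `k`. -/
noncomputable def rowh (m : Option (Fin 2)) (d : ℕ) (j : ℕ) : Polynomial ℤ :=
  match m with
  | none => if j = d then X else if 2 ≤ j ∧ j % 2 = d then 1 else 0
  | some k => if j = (k : ℕ) then 1 else 0

/-- internal (path) row `i ≥ 2`. -/
noncomputable def pairent (i j : ℕ) : Polynomial ℤ :=
  if j = i then X
  else if (i % 2 = 0 ∧ j = i + 1) ∨ (i % 2 = 1 ∧ j + 1 = i) then 1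
  else if i % 2 = 0 ∧ j = 0 then 1
  else if i % 2 = 1 ∧ j = 1 then 1
  else 0

noncomputable def ent (m0 m1 : Option (Fin 2)) (i j : ℕ) : Polynomial ℤ :=
  if i = 0 then rowh m0 0 j else if i = 1 then rowh m1 1 j else pairent i j

noncomputable def matN (m0 m1 : Option (Fin 2)) (n : ℕ) :
    Matrix (Fin n) (Fin n) (Polynomial ℤ) :=
  Matrix.of fun i j => ent m0 m1 i j

noncomputable def mat (m0 m1 : Option (Fin 2)) (s : ℕ) :
    Matrix (Fin (2*s+2)) (Fin (2*s+2)) (Polynomial ℤ) := matN m0 m1 (2*s+2)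

lemma ent_zero (m0 m1 j) : ent m0 m1 0 j = rowh m0 0 j := by simp [ent]
lemma ent_one (m0 m1 j) : ent m0 m1 1 j = rowh m1 1 j := by simp [ent]
lemma ent_ge2 (m0 m1 i j) (h : 2 ≤ i) : ent m0 m1 i j = pairent i j := by
  rw [ent, if_neg (by omega), if_neg (by omega)]

lemma rowh_big_ne (m d j) (hd : d < 2) (hj : 2 ≤ j) (hm : j % 2 ≠ d) : rowh m d j = 0 := by
  cases m with
  | none => rw [rowh, if_neg (by omega), if_neg (by omega)]
  | some k => rw [rowh, if_neg (by have := k.isLt; omega)]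

lemma rowh_big_eq (j d) (hd : d < 2) (hj : 2 ≤ j) (hm : j % 2 = d) (m : Option (Fin 2)) :
    rowh m d j = if m = none then 1 else 0 := by
  cases m with
  | none => rw [rowh, if_neg (by omega), if_pos ⟨hj, hm⟩]; rfl
  | some k => rw [rowh, if_neg (by have := k.isLt; omega)]; rfl

lemma pairent_diag (i) : pairent i i = X := by rw [pairent, if_pos rfl]

lemma pairent_ab (s : ℕ) : pairent (2*s+2) (2*s+3) = 1 := by
  rw [pairent, if_neg (by omega), if_pos (by omega)]

lemma pairent_arow (s j : ℕ) (hj : j < 2*s+2) : pairent (2*s+2) j = if j = 0 then 1 else 0 := by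
  rw [pairent, if_neg (by omega), if_neg (by omega)]
  by_cases h : j = 0
  · rw [if_pos (by omega), if_pos h]
  · rw [if_neg (by omega), if_neg (by omega), if_neg h]

lemma pairent_brow (s j : ℕ) (hj : j < 2*s+3) :
    pairent (2*s+3) j = if j = 1 then 1 else if j = 2*s+2 then 1 else 0 := by
  rw [pairent, if_neg (by omega)]
  by_cases h2 : j = 2*s+2
  · rw [if_pos (by omega), if_neg (by omega), if_pos h2]
  · rw [if_neg (by omega), if_neg (by omega)]
    by_cases h1 : j = 1
    · rw [if_pos (by omega), if_pos h1]
    · rw [if_neg (by omega), if_neg h1, if_neg h2]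

lemma pairent_zero (s x : ℕ) (h2 : 2 ≤ x) (hlt : x < 2*s+4) (ha : x ≠ 2*s+3) (hb : x ≠ 2*s+2) :
    pairent x (2*s+3) = 0 := by
  rw [pairent, if_neg (by omega), if_neg (by omega), if_neg (by omega), if_neg (by omega)]

lemma pairent_zero' (s x : ℕ) (h2 : 2 ≤ x) (hlt : x < 2*s+3) (hb : x ≠ 2*s+2) :
    pairent x (2*s+2) = 0 := by
  rw [pairent, if_neg (by omega), if_neg (by omega), if_neg (by omega), if_neg (by omega)]

/-- entries of the `b` column of the big matrix. -/
lemma ent_colb (m0 m1) (s : ℕ) (x : ℕ) (hlt : x < 2*s+4)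
    (ha : x ≠ 2*s+3) (hb : x ≠ 2*s+2) (h1 : x ≠ 1) : ent m0 m1 x (2*s+3) = 0 := by
  rcases Nat.eq_zero_or_pos x with h | h
  · subst h; rw [ent_zero]; exact rowh_big_ne _ _ _ (by omega) (by omega) (by omega)
  · rw [ent_ge2 _ _ _ _ (by omega)]; exact pairent_zero s x (by omega) hlt ha hb

lemma ent_cola (m0 m1) (s : ℕ) (x : ℕ) (hlt : x < 2*s+3)
    (hb : x ≠ 2*s+2) (h1 : x ≠ 1) (h0 : x ≠ 0) : ent m0 m1 x (2*s+2) = 0 := by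
  rw [ent_ge2 _ _ _ _ (by omega)]; exact pairent_zero' s x (by omega) hlt hb

lemma ent_row1_cola (m0 m1) (s : ℕ) : ent m0 m1 1 (2*s+2) = 0 := by
  rw [ent_one]; exact rowh_big_ne _ _ _ (by omega) (by omega) (by omega)

lemma ent_row1_colb (m0 m1) (s : ℕ) :
    ent m0 m1 1 (2*s+3) = if m1 = none then 1 else 0 := by
  rw [ent_one]; exact rowh_big_eq _ _ (by omega) (by omega) (by omega) m1

lemma ent_row0_cola (m0 m1) (s : ℕ) :
    ent m0 m1 0 (2*s+2) = if m0 = none then 1 else 0 := by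
  rw [ent_zero]; exact rowh_big_eq _ _ (by omega) (by omega) (by omega) m0

variable {R : Type*} [CommSemiring R]

lemma sum3 {n : ℕ} (f : Fin n → R) (a b c : Fin n) (hab : a ≠ b) (hac : a ≠ c) (hbc : b ≠ c)
    (hz : ∀ x, x ≠ a → x ≠ b → x ≠ c → f x = 0) :
    ∑ x, f x = f a + f b + f c := by
  have hsub : ∑ x ∈ ({a, b, c} : Finset (Fin n)), f x = ∑ x, f x := by
    refine Finset.sum_subset (Finset.subset_univ _) (fun x _ hx => ?_)
    simp only [Finset.mem_insert, Finset.mem_singleton, not_or] at hx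
    exact hz x hx.1 hx.2.1 hx.2.2
  rw [← hsub, Finset.sum_insert (by simp [hab, hac]),
    Finset.sum_insert (by simp [hbc]), Finset.sum_singleton, add_assoc]

lemma swap_last_castSucc {m : ℕ} (q : Fin (m+1)) (i : Fin m) :
    Equiv.swap (Fin.last m) q i.castSucc
      = if (i : ℕ) = (q : ℕ) then Fin.last m else i.castSucc := by
  by_cases h : i.castSucc = q
  · rw [if_pos (by rw [← h]; simp), h, Equiv.swap_apply_right]
  · rw [if_neg (by rw [Fin.ext_iff] at h; simpa using h),
      Equiv.swap_apply_of_ne_of_ne (Fin.castSucc_lt_last i).ne h]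

lemma ent_mode0 (m0 m0' m1 : Option (Fin 2)) (i j : ℕ) (h : i ≠ 0) :
    ent m0 m1 i j = ent m0' m1 i j := by
  rw [ent, ent, if_neg h, if_neg h]

lemma ent_mode1 (m0 m1 m1' : Option (Fin 2)) (i j : ℕ) (h : i ≠ 1) :
    ent m0 m1 i j = ent m0 m1' i j := by
  by_cases h0 : i = 0
  · subst h0; rw [ent, ent, if_pos rfl, if_pos rfl]
  · rw [ent, ent, if_neg h0, if_neg h, if_neg h0, if_neg h]

/-- intermediate matrix: the big matrix with the last row and column removed, where
row `r` (if specified) has been overwritten by the last (`b`) row. -/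
noncomputable def matK (m0 m1 : Option (Fin 2)) (s : ℕ) (r : Option ℕ) :
    Matrix (Fin (2*s+2+1)) (Fin (2*s+2+1)) (Polynomial ℤ) :=
  Matrix.of fun i j =>
    if some (i : ℕ) = r then (if (j : ℕ) = 1 then 1 else if (j : ℕ) = 2*s+2 then 1 else 0)
    else ent m0 m1 i j

lemma matK_apply (m0 m1 : Option (Fin 2)) (s : ℕ) (r : Option ℕ) (i j : Fin (2*s+2+1)) :
    matK m0 m1 s r i j
      = if some (i : ℕ) = r then (if (j : ℕ) = 1 then 1 else if (j : ℕ) = 2*s+2 then 1 else 0)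
        else ent m0 m1 i j := rfl

lemma matN_apply (m0 m1 : Option (Fin 2)) (n : ℕ) (i j : Fin n) :
    matN m0 m1 n i j = ent m0 m1 i j := rfl

lemma fin_mk_val (n a : ℕ) (h : a < n) : ((⟨a, h⟩ : Fin n) : ℕ) = a := rfl

lemma swap_last_mk {m : ℕ} (q : ℕ) (hq : q < m+1) (i : Fin m) :
    Equiv.swap (Fin.last m) ⟨q, hq⟩ i.castSucc
      = if (i : ℕ) = q then Fin.last m else i.castSucc :=
  swap_last_castSucc ⟨q, hq⟩ i

lemma perm_expand3 {N : ℕ} (M : Matrix (Fin (N+1)) (Fin (N+1)) R) (a b c : Fin (N+1))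
    (hab : a ≠ b) (hac : a ≠ c) (hbc : b ≠ c)
    (hz : ∀ x : Fin (N+1), x ≠ a → x ≠ b → x ≠ c → M x (Fin.last N) = 0) :
    M.permanent
      = M a (Fin.last N) * (Matrix.of fun i j : Fin N =>
          M (Equiv.swap (Fin.last N) a i.castSucc) j.castSucc).permanent
        + M b (Fin.last N) * (Matrix.of fun i j : Fin N =>
          M (Equiv.swap (Fin.last N) b i.castSucc) j.castSucc).permanent
        + M c (Fin.last N) * (Matrix.of fun i j : Fin N =>
          M (Equiv.swap (Fin.last N) c i.castSucc) j.castSucc).permanent := by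
  rw [perm_expand_last M]
  exact sum3 _ a b c hab hac hbc (fun x h1 h2 h3 => by rw [hz x h1 h2 h3, zero_mul])

lemma innerA (m0 m1 : Option (Fin 2)) (s : ℕ) :
    (matK m0 m1 s none).permanent
      = X * (mat m0 m1 s).permanent
        + (if m0 = none then 1 else 0) * (mat (some 0) m1 s).permanent := by
  rw [perm_expand3 (matK m0 m1 s none) ⟨2*s+2, by omega⟩ ⟨1, by omega⟩ ⟨0, by omega⟩
    (by simp [Fin.ext_iff]) (by simp [Fin.ext_iff]) (by simp [Fin.ext_iff])
    (fun x h1 h2 h3 => by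
      rw [matK_apply, if_neg (by simp), Fin.val_last, ent_cola m0 m1 s x x.isLt
        (by simpa [Fin.ext_iff] using h1) (by simpa [Fin.ext_iff] using h2)
        (fun h => h3 (Fin.ext h))])]
  have hca : matK m0 m1 s none ⟨2*s+2, by omega⟩ (Fin.last (2*s+2)) = X := by
    rw [matK_apply, if_neg (by simp), fin_mk_val, Fin.val_last,
      ent_ge2 _ _ _ _ (by omega), pairent_diag]
  have hcb : matK m0 m1 s none ⟨1, by omega⟩ (Fin.last (2*s+2)) = 0 := by
    rw [matK_apply, if_neg (by simp), fin_mk_val, Fin.val_last, ent_row1_cola]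
  have hcc : matK m0 m1 s none ⟨0, by omega⟩ (Fin.last (2*s+2))
      = (if m0 = none then 1 else 0) := by
    rw [matK_apply, if_neg (by simp), fin_mk_val, Fin.val_last, ent_row0_cola]
  have hma : (Matrix.of fun i j : Fin (2*s+2) =>
      matK m0 m1 s none (Equiv.swap (Fin.last (2*s+2)) ⟨2*s+2, by omega⟩ i.castSucc) j.castSucc)
      = mat m0 m1 s := by
    refine Matrix.ext (fun i j => ?_)
    rw [Matrix.of_apply, swap_last_mk, if_neg (by omega), matK_apply, if_neg (by simp)]
    rfl
  have hmc : (Matrix.of fun i j : Fin (2*s+2) =>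
      matK m0 m1 s none (Equiv.swap (Fin.last (2*s+2)) ⟨0, by omega⟩ i.castSucc) j.castSucc)
      = mat (some 0) m1 s := by
    refine Matrix.ext (fun i j => ?_)
    rw [Matrix.of_apply, swap_last_mk]
    by_cases h0 : (i : ℕ) = 0
    · rw [if_pos h0, matK_apply, if_neg (by simp), Fin.val_last, Fin.coe_castSucc,
        ent_ge2 _ _ _ _ (by omega), pairent_arow s j (by omega)]
      show _ = ent (some 0) m1 (i : ℕ) j
      rw [h0, ent_zero]
      simp [rowh]
    · rw [if_neg h0, matK_apply, if_neg (by simp), Fin.coe_castSucc, Fin.coe_castSucc]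
      show _ = ent (some 0) m1 (i : ℕ) j
      exact ent_mode0 m0 (some 0) m1 i j h0
  rw [hca, hcb, hcc, hma, hmc, zero_mul, add_zero]

lemma ent_mode01 (m0 m0' m1 m1' : Option (Fin 2)) (i j : ℕ) (h0 : i ≠ 0) (h1 : i ≠ 1) :
    ent m0 m1 i j = ent m0' m1' i j := by
  rw [ent_mode0 m0 m0' m1 i j h0, ent_mode1 m0' m1 m1' i j h1]

lemma lit_restrict (s : ℕ) (j : Fin (2*s+2)) :
    (if ((j.castSucc : Fin (2*s+2+1)) : ℕ) = 1 then (1 : Polynomial ℤ)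
      else if ((j.castSucc : Fin (2*s+2+1)) : ℕ) = 2*s+2 then 1 else 0)
    = rowh (some 1) 1 (j : ℕ) := by
  rw [Fin.coe_castSucc, rowh]
  by_cases h : (j : ℕ) = 1
  · rw [if_pos h, if_pos (by simpa using h)]
  · rw [if_neg h, if_neg (by have := j.isLt; omega), if_neg (by simpa using h)]

lemma innerB (m0 m1 : Option (Fin 2)) (s : ℕ) :
    (matK m0 m1 s (some (2*s+2))).permanent
      = (mat m0 m1 s).permanent
        + (if m0 = none then 1 else 0) * (mat (some 1) m1 s).permanent := by
  rw [perm_expand3 (matK m0 m1 s (some (2*s+2))) ⟨2*s+2, by omega⟩ ⟨1, by omega⟩ ⟨0, by omega⟩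
    (by simp [Fin.ext_iff]) (by simp [Fin.ext_iff]) (by simp [Fin.ext_iff])
    (fun x h1 h2 h3 => by
      rw [matK_apply, if_neg (by simpa [Fin.ext_iff, Option.some.injEq] using h1), Fin.val_last,
        ent_cola m0 m1 s x x.isLt (by simpa [Fin.ext_iff] using h1)
        (by simpa [Fin.ext_iff] using h2) (fun h => h3 (Fin.ext h))])]
  have hca : matK m0 m1 s (some (2*s+2)) ⟨2*s+2, by omega⟩ (Fin.last (2*s+2)) = 1 := by
    rw [matK_apply, if_pos (by rw [fin_mk_val]), Fin.val_last, if_neg (by omega), if_pos rfl]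
  have hcb : matK m0 m1 s (some (2*s+2)) ⟨1, by omega⟩ (Fin.last (2*s+2)) = 0 := by
    rw [matK_apply, if_neg (by simp only [Option.some.injEq, fin_mk_val]; omega),
      fin_mk_val, Fin.val_last, ent_row1_cola]
  have hcc : matK m0 m1 s (some (2*s+2)) ⟨0, by omega⟩ (Fin.last (2*s+2))
      = (if m0 = none then 1 else 0) := by
    rw [matK_apply, if_neg (by simp only [Option.some.injEq, fin_mk_val]; omega),
      fin_mk_val, Fin.val_last, ent_row0_cola]
  have hma : (Matrix.of fun i j : Fin (2*s+2) =>
      matK m0 m1 s (some (2*s+2))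
        (Equiv.swap (Fin.last (2*s+2)) ⟨2*s+2, by omega⟩ i.castSucc) j.castSucc)
      = mat m0 m1 s := by
    refine Matrix.ext (fun i j => ?_)
    rw [Matrix.of_apply, swap_last_mk, if_neg (by omega), matK_apply,
      if_neg (by simp only [Option.some.injEq, Fin.coe_castSucc]; have := i.isLt; omega)]
    rfl
  have hmc : (Matrix.of fun i j : Fin (2*s+2) =>
      matK m0 m1 s (some (2*s+2))
        (Equiv.swap (Fin.last (2*s+2)) ⟨0, by omega⟩ i.castSucc) j.castSucc)
      = mat (some 1) m1 s := by
    refine Matrix.ext (fun i j => ?_)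
    rw [Matrix.of_apply, swap_last_mk]
    by_cases h0 : (i : ℕ) = 0
    · rw [if_pos h0, matK_apply, if_pos (by rw [Fin.val_last]), lit_restrict]
      show _ = ent (some 1) m1 (i : ℕ) j
      rw [h0, ent_zero]
      rfl
    · rw [if_neg h0, matK_apply,
        if_neg (by simp only [Option.some.injEq, Fin.coe_castSucc]; have := i.isLt; omega),
        Fin.coe_castSucc, Fin.coe_castSucc]
      show _ = ent (some 1) m1 (i : ℕ) j
      exact ent_mode0 m0 (some 1) m1 i j h0
  rw [hca, hcb, hcc, hma, hmc, zero_mul, add_zero, one_mul]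

lemma innerC (m0 m1 : Option (Fin 2)) (s : ℕ) :
    (matK m0 m1 s (some 1)).permanent
      = X * (mat m0 (some 1) s).permanent + (mat m0 (some 0) s).permanent
        + (if m0 = none then 1 else 0) * (mat (some 0) (some 1) s).permanent := by
  rw [perm_expand3 (matK m0 m1 s (some 1)) ⟨2*s+2, by omega⟩ ⟨1, by omega⟩ ⟨0, by omega⟩
    (by simp [Fin.ext_iff]) (by simp [Fin.ext_iff]) (by simp [Fin.ext_iff])
    (fun x h1 h2 h3 => by
      rw [matK_apply, if_neg (by simpa [Fin.ext_iff, Option.some.injEq] using h2), Fin.val_last,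
        ent_cola m0 m1 s x x.isLt (by simpa [Fin.ext_iff] using h1)
        (by simpa [Fin.ext_iff] using h2) (fun h => h3 (Fin.ext h))])]
  have hca : matK m0 m1 s (some 1) ⟨2*s+2, by omega⟩ (Fin.last (2*s+2)) = X := by
    rw [matK_apply, if_neg (by simp only [Option.some.injEq, fin_mk_val]; omega),
      fin_mk_val, Fin.val_last, ent_ge2 _ _ _ _ (by omega), pairent_diag]
  have hcb : matK m0 m1 s (some 1) ⟨1, by omega⟩ (Fin.last (2*s+2)) = 1 := by
    rw [matK_apply, if_pos (by rw [fin_mk_val]), Fin.val_last, if_neg (by omega), if_pos rfl]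
  have hcc : matK m0 m1 s (some 1) ⟨0, by omega⟩ (Fin.last (2*s+2))
      = (if m0 = none then 1 else 0) := by
    rw [matK_apply, if_neg (by simp only [Option.some.injEq, fin_mk_val]; omega),
      fin_mk_val, Fin.val_last, ent_row0_cola]
  have hma : (Matrix.of fun i j : Fin (2*s+2) =>
      matK m0 m1 s (some 1)
        (Equiv.swap (Fin.last (2*s+2)) ⟨2*s+2, by omega⟩ i.castSucc) j.castSucc)
      = mat m0 (some 1) s := by
    refine Matrix.ext (fun i j => ?_)
    rw [Matrix.of_apply, swap_last_mk, if_neg (by omega), matK_apply]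
    by_cases h1 : (i : ℕ) = 1
    · rw [if_pos (by rw [Fin.coe_castSucc]; exact congrArg some h1), lit_restrict]
      show _ = ent m0 (some 1) (i : ℕ) j
      rw [h1, ent_one]
    · rw [if_neg (by simp only [Option.some.injEq, Fin.coe_castSucc]; omega),
        Fin.coe_castSucc, Fin.coe_castSucc]
      show _ = ent m0 (some 1) (i : ℕ) j
      exact ent_mode1 m0 m1 (some 1) i j h1
  have hmb : (Matrix.of fun i j : Fin (2*s+2) =>
      matK m0 m1 s (some 1)
        (Equiv.swap (Fin.last (2*s+2)) ⟨1, by omega⟩ i.castSucc) j.castSucc)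
      = mat m0 (some 0) s := by
    refine Matrix.ext (fun i j => ?_)
    rw [Matrix.of_apply, swap_last_mk]
    by_cases h1 : (i : ℕ) = 1
    · rw [if_pos h1, matK_apply,
        if_neg (by simp only [Option.some.injEq, Fin.val_last]; omega),
        Fin.val_last, Fin.coe_castSucc, ent_ge2 _ _ _ _ (by omega),
        pairent_arow s j (by have := j.isLt; omega)]
      show _ = ent m0 (some 0) (i : ℕ) j
      rw [h1, ent_one]
      simp [rowh]
    · rw [if_neg h1, matK_apply,
        if_neg (by simp only [Option.some.injEq, Fin.coe_castSucc]; omega),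
        Fin.coe_castSucc, Fin.coe_castSucc]
      show _ = ent m0 (some 0) (i : ℕ) j
      exact ent_mode1 m0 m1 (some 0) i j h1
  have hmc : (Matrix.of fun i j : Fin (2*s+2) =>
      matK m0 m1 s (some 1)
        (Equiv.swap (Fin.last (2*s+2)) ⟨0, by omega⟩ i.castSucc) j.castSucc)
      = mat (some 0) (some 1) s := by
    refine Matrix.ext (fun i j => ?_)
    rw [Matrix.of_apply, swap_last_mk]
    by_cases h0 : (i : ℕ) = 0
    · rw [if_pos h0, matK_apply,
        if_neg (by simp only [Option.some.injEq, Fin.val_last]; omega),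
        Fin.val_last, Fin.coe_castSucc, ent_ge2 _ _ _ _ (by omega),
        pairent_arow s j (by have := j.isLt; omega)]
      show _ = ent (some 0) (some 1) (i : ℕ) j
      rw [h0, ent_zero]
      simp [rowh]
    · rw [if_neg h0, matK_apply]
      by_cases h1 : (i : ℕ) = 1
      · rw [if_pos (by rw [Fin.coe_castSucc]; exact congrArg some h1), lit_restrict]
        show _ = ent (some 0) (some 1) (i : ℕ) j
        rw [h1, ent_one]
      · rw [if_neg (by simp only [Option.some.injEq, Fin.coe_castSucc]; omega),
          Fin.coe_castSucc, Fin.coe_castSucc]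
        show _ = ent (some 0) (some 1) (i : ℕ) j
        exact ent_mode01 m0 (some 0) m1 (some 1) i j h0 h1
  rw [hca, hcb, hcc, hma, hmb, hmc, one_mul]

theorem mat_rec (m0 m1 : Option (Fin 2)) (s : ℕ) :
    (mat m0 m1 (s+1)).permanent
      = (X^2+1) * (mat m0 m1 s).permanent
        + (if m0 = none then
            X * (mat (some 0) m1 s).permanent + (mat (some 1) m1 s).permanent else 0)
        + (if m1 = none then
            X * (mat m0 (some 1) s).permanent + (mat m0 (some 0) s).permanent
              + (if m0 = none then (mat (some 0) (some 1) s).permanent else 0) else 0) := by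
  have hlast : ((Fin.last (2*s+2+1)) : ℕ) = 2*s+3 := rfl
  have start : (mat m0 m1 (s+1)).permanent = (matN m0 m1 (2*s+2+1+1)).permanent := rfl
  rw [start, perm_expand3 (matN m0 m1 (2*s+2+1+1)) ⟨2*s+3, by omega⟩ ⟨2*s+2, by omega⟩
    ⟨1, by omega⟩ (by simp [Fin.ext_iff]) (by simp [Fin.ext_iff]) (by simp [Fin.ext_iff])
    (fun x h1 h2 h3 => by
      rw [matN_apply, hlast]
      exact ent_colb m0 m1 s x x.isLt (by simpa [Fin.ext_iff] using h1)
        (by simpa [Fin.ext_iff] using h2) (by simpa [Fin.ext_iff] using h3))]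
  have hca : matN m0 m1 (2*s+2+1+1) ⟨2*s+3, by omega⟩ (Fin.last (2*s+2+1)) = X := by
    rw [matN_apply, fin_mk_val, hlast, ent_ge2 _ _ _ _ (by omega), pairent_diag]
  have hcb : matN m0 m1 (2*s+2+1+1) ⟨2*s+2, by omega⟩ (Fin.last (2*s+2+1)) = 1 := by
    rw [matN_apply, fin_mk_val, hlast, ent_ge2 _ _ _ _ (by omega), pairent_ab]
  have hcc : matN m0 m1 (2*s+2+1+1) ⟨1, by omega⟩ (Fin.last (2*s+2+1))
      = (if m1 = none then 1 else 0) := by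
    rw [matN_apply, fin_mk_val, hlast, ent_row1_colb]
  have hKa : (Matrix.of fun i j : Fin (2*s+2+1) =>
      matN m0 m1 (2*s+2+1+1)
        (Equiv.swap (Fin.last (2*s+2+1)) ⟨2*s+3, by omega⟩ i.castSucc) j.castSucc)
      = matK m0 m1 s none := by
    refine Matrix.ext (fun i j => ?_)
    rw [Matrix.of_apply, swap_last_mk, if_neg (by have := i.isLt; omega), matN_apply,
      matK_apply, if_neg (by simp), Fin.coe_castSucc, Fin.coe_castSucc]
  have hKb : (Matrix.of fun i j : Fin (2*s+2+1) =>
      matN m0 m1 (2*s+2+1+1)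
        (Equiv.swap (Fin.last (2*s+2+1)) ⟨2*s+2, by omega⟩ i.castSucc) j.castSucc)
      = matK m0 m1 s (some (2*s+2)) := by
    refine Matrix.ext (fun i j => ?_)
    rw [Matrix.of_apply, swap_last_mk, matK_apply]
    by_cases h : (i : ℕ) = 2*s+2
    · rw [if_pos h, if_pos (congrArg some h), matN_apply, hlast, Fin.coe_castSucc,
        ent_ge2 _ _ _ _ (by omega), pairent_brow s j (by have := j.isLt; omega)]
    · rw [if_neg h, if_neg (by simpa [Option.some.injEq] using h), matN_apply,
        Fin.coe_castSucc, Fin.coe_castSucc]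
  have hKc : (Matrix.of fun i j : Fin (2*s+2+1) =>
      matN m0 m1 (2*s+2+1+1)
        (Equiv.swap (Fin.last (2*s+2+1)) ⟨1, by omega⟩ i.castSucc) j.castSucc)
      = matK m0 m1 s (some 1) := by
    refine Matrix.ext (fun i j => ?_)
    rw [Matrix.of_apply, swap_last_mk, matK_apply]
    by_cases h : (i : ℕ) = 1
    · rw [if_pos h, if_pos (congrArg some h), matN_apply, hlast, Fin.coe_castSucc,
        ent_ge2 _ _ _ _ (by omega), pairent_brow s j (by have := j.isLt; omega)]
    · rw [if_neg h, if_neg (by simpa [Option.some.injEq] using h), matN_apply,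
        Fin.coe_castSucc, Fin.coe_castSucc]
  rw [hca, hcb, hcc, hKa, hKb, hKc, innerA, innerB, innerC]
  rcases m0 with _ | k0 <;> rcases m1 with _ | k1 <;> simp <;> ring

lemma mat_kk_zero (k : Fin 2) (s : ℕ) : (mat (some k) (some k) s).permanent = 0 := by
  refine perm_two_unit_rows _ ⟨0, by omega⟩ ⟨1, by omega⟩ ⟨(k : ℕ), by have := k.isLt; omega⟩
    (by simp [Fin.ext_iff]) (fun j hj => ?_) (fun j hj => ?_)
  · show ent (some k) (some k) 0 (j : ℕ) = 0
    rw [ent_zero, rowh, if_neg (by simpa [Fin.ext_iff] using hj)]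
  · show ent (some k) (some k) 1 (j : ℕ) = 0
    rw [ent_one, rowh, if_neg (by simpa [Fin.ext_iff] using hj)]

lemma mat_base (m0 m1 : Option (Fin 2)) :
    (mat m0 m1 0).permanent
      = rowh m0 0 0 * rowh m1 1 1 + rowh m1 1 0 * rowh m0 0 1 := by
  have h := perm_fin_two (mat m0 m1 0)
  rw [h]
  rfl

lemma Ruv_val (s : ℕ) : (mat (some 0) (some 1) s).permanent = (X^2+1)^s := by
  induction s with
  | zero => rw [mat_base]; simp [rowh]
  | succ n ih => rw [mat_rec]; simp only [reduceCtorEq, if_false]; rw [ih]; ring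

lemma Xsw_val (s : ℕ) : (mat (some 1) (some 0) s).permanent = (X^2+1)^s := by
  induction s with
  | zero => rw [mat_base]; simp [rowh]
  | succ n ih => rw [mat_rec]; simp only [reduceCtorEq, if_false]; rw [ih]; ring

lemma Xuv_val (s : ℕ) :
    (mat (some 1) none s).permanent = (s : Polynomial ℤ) * (X^2+1)^(s-1) := by
  induction s with
  | zero => rw [mat_base]; simp [rowh]
  | succ n ih =>
    rw [mat_rec]
    simp only [reduceCtorEq, if_false, if_true]
    rw [ih, mat_kk_zero, Xsw_val]
    rcases n with _ | m
    · simp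
    · rw [Nat.succ_sub_one, Nat.succ_sub_one]
      push_cast
      ring

lemma Xvu_val (s : ℕ) :
    (mat none (some 0) s).permanent = (s : Polynomial ℤ) * (X^2+1)^(s-1) := by
  induction s with
  | zero => rw [mat_base]; simp [rowh]
  | succ n ih =>
    rw [mat_rec]
    simp only [reduceCtorEq, if_false, if_true]
    rw [ih, mat_kk_zero, Xsw_val]
    rcases n with _ | m
    · simp
    · rw [Nat.succ_sub_one, Nat.succ_sub_one]
      push_cast
      ring

lemma Ru_val (s : ℕ) :
    (mat (some 0) none s).permanent
      = X * (X^2+1)^s + (s : Polynomial ℤ) * X * (X^2+1)^(s-1) := by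
  induction s with
  | zero => rw [mat_base]; simp [rowh]
  | succ n ih =>
    rw [mat_rec]
    simp only [reduceCtorEq, if_false, if_true]
    rw [ih, mat_kk_zero, Ruv_val]
    rcases n with _ | m
    · simp; ring
    · rw [Nat.succ_sub_one, Nat.succ_sub_one]
      push_cast
      ring

lemma Rv_val (s : ℕ) :
    (mat none (some 1) s).permanent
      = X * (X^2+1)^s + (s : Polynomial ℤ) * X * (X^2+1)^(s-1) := by
  induction s with
  | zero => rw [mat_base]; simp [rowh]
  | succ n ih =>
    rw [mat_rec]
    simp only [reduceCtorEq, if_false, if_true]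
    rw [ih, mat_kk_zero, Ruv_val]
    rcases n with _ | m
    · simp; ring
    · rw [Nat.succ_sub_one, Nat.succ_sub_one]
      push_cast
      ring

lemma P_val (s : ℕ) :
    (mat none none s).permanent
      = (X^2+1)^(s+1) + (2*(s : Polynomial ℤ) - 1) * (X^2+1)^s
        + ((s : Polynomial ℤ)^2 - 2*(s : Polynomial ℤ)) * (X^2+1)^(s-1) := by
  induction s with
  | zero => rw [mat_base]; simp [rowh]; ring
  | succ n ih =>
    rw [mat_rec]
    simp only [if_true]
    rw [ih, Ru_val, Rv_val, Xuv_val, Xvu_val, Ruv_val]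
    rcases n with _ | m
    · simp; ring
    · rw [Nat.succ_sub_one, Nat.succ_sub_one]
      push_cast
      ring

-- entry values of the live matrix, at ℕ level
lemma ent_uu : ent none none 0 0 = X := by simp [ent, rowh]
lemma ent_uv : ent none none 0 1 = 0 := by simp [ent, rowh]
lemma ent_vu : ent none none 1 0 = 0 := by simp [ent, rowh]
lemma ent_vv : ent none none 1 1 = X := by simp [ent, rowh]
lemma ent_ua (j : ℕ) : ent none none 0 (2*j+2) = 1 := by
  rw [ent_zero, rowh, if_neg (by omega), if_pos (by omega)]
lemma ent_ub (j : ℕ) : ent none none 0 (2*j+3) = 0 := by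
  rw [ent_zero, rowh, if_neg (by omega), if_neg (by omega)]
lemma ent_va (j : ℕ) : ent none none 1 (2*j+2) = 0 := by
  rw [ent_one, rowh, if_neg (by omega), if_neg (by omega)]
lemma ent_vb (j : ℕ) : ent none none 1 (2*j+3) = 1 := by
  rw [ent_one, rowh, if_neg (by omega), if_pos (by omega)]
lemma ent_au (i : ℕ) : ent none none (2*i+2) 0 = 1 := by
  rw [ent_ge2 _ _ _ _ (by omega), pairent, if_neg (by omega), if_neg (by omega),
    if_pos (by omega)]
lemma ent_av (i : ℕ) : ent none none (2*i+2) 1 = 0 := by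
  rw [ent_ge2 _ _ _ _ (by omega), pairent, if_neg (by omega), if_neg (by omega),
    if_neg (by omega), if_neg (by omega)]
lemma ent_bu (i : ℕ) : ent none none (2*i+3) 0 = 0 := by
  rw [ent_ge2 _ _ _ _ (by omega), pairent, if_neg (by omega), if_neg (by omega),
    if_neg (by omega), if_neg (by omega)]
lemma ent_bv (i : ℕ) : ent none none (2*i+3) 1 = 1 := by
  rw [ent_ge2 _ _ _ _ (by omega), pairent, if_neg (by omega), if_neg (by omega),
    if_neg (by omega), if_pos (by omega)]
lemma ent_aa (i j : ℕ) : ent none none (2*i+2) (2*j+2) = if i = j then X else 0 := by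
  rw [ent_ge2 _ _ _ _ (by omega), pairent]
  by_cases h : i = j
  · rw [if_pos (by omega), if_pos h]
  · rw [if_neg (by omega), if_neg (by omega), if_neg (by omega), if_neg (by omega), if_neg h]
lemma ent_ab (i j : ℕ) : ent none none (2*i+2) (2*j+3) = if i = j then 1 else 0 := by
  rw [ent_ge2 _ _ _ _ (by omega), pairent, if_neg (by omega)]
  by_cases h : i = j
  · rw [if_pos (by omega), if_pos h]
  · rw [if_neg (by omega), if_neg (by omega), if_neg (by omega), if_neg h]
lemma ent_ba (i j : ℕ) : ent none none (2*i+3) (2*j+2) = if i = j then 1 else 0 := by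
  rw [ent_ge2 _ _ _ _ (by omega), pairent, if_neg (by omega)]
  by_cases h : i = j
  · rw [if_pos (by omega), if_pos h]
  · rw [if_neg (by omega), if_neg (by omega), if_neg (by omega), if_neg h]
lemma ent_bb (i j : ℕ) : ent none none (2*i+3) (2*j+3) = if i = j then X else 0 := by
  rw [ent_ge2 _ _ _ _ (by omega), pairent]
  by_cases h : i = j
  · rw [if_pos (by omega), if_pos h]
  · rw [if_neg (by omega), if_neg (by omega), if_neg (by omega), if_neg (by omega), if_neg h]

noncomputable def eps (s : ℕ) : (Fin 2 ⊕ Fin s × Fin 2) → Polynomial ℤ :=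
  Sum.elim (fun k => if k = 0 then 1 else -1) (fun p => if p.2 = 0 then -1 else 1)

def vEquiv (s : ℕ) : (Fin 2 ⊕ Fin s × Fin 2) ≃ Fin (2*s+2) where
  toFun x := match x with
    | Sum.inl k => ⟨(k : ℕ), by have := k.isLt; omega⟩
    | Sum.inr (i, k) => ⟨2*(i : ℕ)+2+(k : ℕ), by have := i.isLt; have := k.isLt; omega⟩
  invFun j := if h : (j : ℕ) < 2 then Sum.inl ⟨(j : ℕ), h⟩
    else Sum.inr (⟨((j : ℕ)-2)/2, by have := j.isLt; omega⟩, ⟨((j : ℕ)-2) % 2, by omega⟩)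
  left_inv x := by
    rcases x with k | ⟨i, k⟩
    · dsimp only
      rw [dif_pos (by exact k.isLt)]
    · dsimp only
      rw [dif_neg (by omega)]
      have hk := k.isLt
      refine congrArg Sum.inr (Prod.ext (Fin.ext ?_) (Fin.ext ?_)) <;> simp <;> omega
  right_inv j := by
    dsimp only
    have hj := j.isLt
    by_cases h : (j : ℕ) < 2
    · rw [dif_pos h]
    · rw [dif_neg h]
      exact Fin.ext (by show 2*(((j:ℕ)-2)/2)+2+((j:ℕ)-2)%2 = (j:ℕ); omega)


open scoped Classical in
lemma perm_transport (s : ℕ) :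
    (((G1 s).adjMatrix ℤ).charmatrix).permanent = (mat none none s).permanent := by
  have hchar : ((G1 s).adjMatrix ℤ).charmatrix
      = Matrix.of (fun x y => eps s x *
          ((mat none none s).submatrix (vEquiv s) (vEquiv s)) x y * eps s y) := by
    refine Matrix.ext (fun x y => ?_)
    rw [Matrix.of_apply, Matrix.submatrix_apply]
    rcases x with k | ⟨i, k⟩ <;> rcases y with l | ⟨j, l⟩

    · fin_cases k <;> fin_cases l
      · rw [Matrix.charmatrix_apply_eq, SimpleGraph.adjMatrix_apply,
          if_neg (SimpleGraph.irrefl _)]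
        show X - C 0 = 1 * ent none none 0 0 * 1
        rw [ent_uu]; simp
      · rw [Matrix.charmatrix_apply_ne _ _ _ (by simp), SimpleGraph.adjMatrix_apply,
          if_neg (by simp [G1, SimpleGraph.fromRel_adj])]
        show -C 0 = 1 * ent none none 0 1 * (-1)
        rw [ent_uv]; simp
      · rw [Matrix.charmatrix_apply_ne _ _ _ (by simp), SimpleGraph.adjMatrix_apply,
          if_neg (by simp [G1, SimpleGraph.fromRel_adj])]
        show -C 0 = -1 * ent none none 1 0 * 1
        rw [ent_vu]; simp
      · rw [Matrix.charmatrix_apply_eq, SimpleGraph.adjMatrix_apply,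
          if_neg (SimpleGraph.irrefl _)]
        show X - C 0 = -1 * ent none none 1 1 * (-1)
        rw [ent_vv]; simp
    · fin_cases k <;> fin_cases l
      · rw [Matrix.charmatrix_apply_ne _ _ _ (by simp), SimpleGraph.adjMatrix_apply,
          if_pos (by
            simp only [G1, SimpleGraph.fromRel_adj]
            exact ⟨by simp, Or.inl ⟨j, Or.inl ⟨rfl, rfl⟩⟩⟩)]
        show -C 1 = 1 * ent none none 0 (2*(j:ℕ)+2) * (-1)
        rw [ent_ua]; simp
      · rw [Matrix.charmatrix_apply_ne _ _ _ (by simp), SimpleGraph.adjMatrix_apply,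
          if_neg (by simp [G1, SimpleGraph.fromRel_adj])]
        show -C 0 = 1 * ent none none 0 (2*(j:ℕ)+3) * 1
        rw [ent_ub]; simp
      · rw [Matrix.charmatrix_apply_ne _ _ _ (by simp), SimpleGraph.adjMatrix_apply,
          if_neg (by simp [G1, SimpleGraph.fromRel_adj])]
        show -C 0 = -1 * ent none none 1 (2*(j:ℕ)+2) * (-1)
        rw [ent_va]; simp
      · rw [Matrix.charmatrix_apply_ne _ _ _ (by simp), SimpleGraph.adjMatrix_apply,
          if_pos (by
            simp only [G1, SimpleGraph.fromRel_adj]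
            exact ⟨by simp, Or.inl ⟨j, Or.inr (Or.inl ⟨rfl, rfl⟩)⟩⟩)]
        show -C 1 = -1 * ent none none 1 (2*(j:ℕ)+3) * 1
        rw [ent_vb]; simp
    · fin_cases k <;> fin_cases l
      · rw [Matrix.charmatrix_apply_ne _ _ _ (by simp), SimpleGraph.adjMatrix_apply,
          if_pos (by
            simp only [G1, SimpleGraph.fromRel_adj]
            exact ⟨by simp, Or.inr ⟨i, Or.inl ⟨rfl, rfl⟩⟩⟩)]
        show -C 1 = -1 * ent none none (2*(i:ℕ)+2) 0 * 1
        rw [ent_au]; simp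
      · rw [Matrix.charmatrix_apply_ne _ _ _ (by simp), SimpleGraph.adjMatrix_apply,
          if_neg (by simp [G1, SimpleGraph.fromRel_adj])]
        show -C 0 = -1 * ent none none (2*(i:ℕ)+2) 1 * (-1)
        rw [ent_av]; simp
      · rw [Matrix.charmatrix_apply_ne _ _ _ (by simp), SimpleGraph.adjMatrix_apply,
          if_neg (by simp [G1, SimpleGraph.fromRel_adj])]
        show -C 0 = 1 * ent none none (2*(i:ℕ)+3) 0 * 1
        rw [ent_bu]; simp
      · rw [Matrix.charmatrix_apply_ne _ _ _ (by simp), SimpleGraph.adjMatrix_apply,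
          if_pos (by
            simp only [G1, SimpleGraph.fromRel_adj]
            exact ⟨by simp, Or.inr ⟨i, Or.inr (Or.inl ⟨rfl, rfl⟩)⟩⟩)]
        show -C 1 = 1 * ent none none (2*(i:ℕ)+3) 1 * (-1)
        rw [ent_bv]; simp
    · fin_cases k <;> fin_cases l
      · by_cases hij : i = j
        · subst hij
          rw [Matrix.charmatrix_apply_eq, SimpleGraph.adjMatrix_apply,
            if_neg (SimpleGraph.irrefl _)]
          show X - C 0 = -1 * ent none none (2*(i:ℕ)+2) (2*(i:ℕ)+2) * (-1)
          rw [ent_aa, if_pos rfl]; simp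
        · rw [Matrix.charmatrix_apply_ne _ _ _ (by simp [hij]), SimpleGraph.adjMatrix_apply,
            if_neg (by simp [G1, SimpleGraph.fromRel_adj])]
          show -C 0 = -1 * ent none none (2*(i:ℕ)+2) (2*(j:ℕ)+2) * (-1)
          rw [ent_aa, if_neg (by simpa [Fin.ext_iff] using hij)]; simp
      · by_cases hij : i = j
        · subst hij
          rw [Matrix.charmatrix_apply_ne _ _ _ (by simp), SimpleGraph.adjMatrix_apply,
            if_pos (by
            simp only [G1, SimpleGraph.fromRel_adj]
            exact ⟨by simp, Or.inl ⟨i, Or.inr (Or.inr ⟨rfl, rfl⟩)⟩⟩)]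
          show -C 1 = -1 * ent none none (2*(i:ℕ)+2) (2*(i:ℕ)+3) * 1
          rw [ent_ab, if_pos rfl]; simp
        · rw [Matrix.charmatrix_apply_ne _ _ _ (by simp), SimpleGraph.adjMatrix_apply,
            if_neg (by
              simp only [G1, SimpleGraph.fromRel_adj]
              rintro ⟨-, (⟨i', h⟩ | ⟨i', h⟩)⟩ <;> simp_all <;> omega)]
          show -C 0 = -1 * ent none none (2*(i:ℕ)+2) (2*(j:ℕ)+3) * 1
          rw [ent_ab, if_neg (by simpa [Fin.ext_iff] using hij)]; simp
      · by_cases hij : i = j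
        · subst hij
          rw [Matrix.charmatrix_apply_ne _ _ _ (by simp), SimpleGraph.adjMatrix_apply,
            if_pos (by
            simp only [G1, SimpleGraph.fromRel_adj]
            exact ⟨by simp, Or.inr ⟨i, Or.inr (Or.inr ⟨rfl, rfl⟩)⟩⟩)]
          show -C 1 = 1 * ent none none (2*(i:ℕ)+3) (2*(i:ℕ)+2) * (-1)
          rw [ent_ba, if_pos rfl]; simp
        · rw [Matrix.charmatrix_apply_ne _ _ _ (by simp), SimpleGraph.adjMatrix_apply,
            if_neg (by
              simp only [G1, SimpleGraph.fromRel_adj]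
              rintro ⟨-, (⟨i', h⟩ | ⟨i', h⟩)⟩ <;> simp_all <;> omega)]
          show -C 0 = 1 * ent none none (2*(i:ℕ)+3) (2*(j:ℕ)+2) * (-1)
          rw [ent_ba, if_neg (by simpa [Fin.ext_iff] using hij)]; simp
      · by_cases hij : i = j
        · subst hij
          rw [Matrix.charmatrix_apply_eq, SimpleGraph.adjMatrix_apply,
            if_neg (SimpleGraph.irrefl _)]
          show X - C 0 = 1 * ent none none (2*(i:ℕ)+3) (2*(i:ℕ)+3) * 1
          rw [ent_bb, if_pos rfl]; simp
        · rw [Matrix.charmatrix_apply_ne _ _ _ (by simp [hij]), SimpleGraph.adjMatrix_apply,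
            if_neg (by simp [G1, SimpleGraph.fromRel_adj])]
          show -C 0 = 1 * ent none none (2*(i:ℕ)+3) (2*(j:ℕ)+3) * 1
          rw [ent_bb, if_neg (by simpa [Fin.ext_iff] using hij)]; simp
  rw [hchar, perm_conj, perm_submatrix]
  have hsq : ∀ x, eps s x * eps s x = 1 := by
    intro x
    rcases x with k | ⟨i, k⟩ <;> simp [eps] <;> split_ifs <;> ring
  rw [Finset.prod_congr rfl (fun x _ => hsq x), Finset.prod_const_one, one_mul]

open scoped Classical in
/-- The permanental polynomial of `G₁ˢ` is
`(1 + 1/(x² + s - 1) + s/(x² + 1)) (x² + s - 1) (x² + 1)ˢ`, written with denominators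
cleared as `(x² + s - 1)(x² + 1)ˢ + (x² + 1)ˢ + s (x² + s - 1)(x² + 1)^(s-1)`. -/
theorem stmt_19 (s : ℕ) (hs : 2 ≤ s) :
    Matrix.permanent ((G1 s).adjMatrix ℤ).charmatrix
      = (X ^ 2 + (s : Polynomial ℤ) - 1) * (X ^ 2 + 1) ^ s + (X ^ 2 + 1) ^ s
        + (s : Polynomial ℤ) * (X ^ 2 + (s : Polynomial ℤ) - 1) * (X ^ 2 + 1) ^ (s - 1) := by
  rw [perm_transport s, P_val s]
  obtain ⟨r, rfl⟩ : ∃ r, s = r + 2 := ⟨s - 2, by omega⟩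
  have h1 : r + 2 - 1 = r + 1 := rfl
  rw [h1]
  push_cast
  ring
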